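/- Fix l > 0 and n ≥ 1. For λ = (λ₁,…,λ_n) with λ₁ > ⋯ > λ_n > 0 and w = (w₁,…,w_n) with w_j > 0 and Σ_{j=1}^n w_j < 1, set λ₀ = 0 and w₀ = 1 − Σ_{j=1}^n w_j, and define real numbers κ₀(λ,w),…,κ_{2n+1}(λ,w) as the coefficients of the polynomial identity Σ_{j=0}^{2n+1} κ_j z^j = z·∏_{j=1}^n (z² − λ_j²) − l·Σ_{j=0}^n w_j ∏_{0≤k≤n, k≠j} (z² − λ_k²). (When (λ_j, w_j) are the data of the spectral measure w₀δ₀ + Σ (w_j/2)(δ_{λ_j}+δ_{−λ_j}) of a (2n+1)×(2n+1) zero-diagonal Jacobi matrix 𝒥 with positive off-diagonals, this polynomial equals det(zI − 𝒥 − l·I_{1×1}); in particular κ_{2n+1} = 1 and κ_{2n} = −l.) Then |det ∂(κ₀,…,κ_{2n−1})/∂(λ₁,…,λ_n,w₁,…,w_n)| = 2^n l^n ∏_{j=1}^n λ_j³ · ∏_{1≤j<k≤n} |λ_j² − λ_k²|². -/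

import Mathlib

open MeasureTheory Matrix Polynomial Finset

/-- The polynomial `z·∏ (z² - λ_j²) - l·Σ_{j=0}^n w_j ∏_{k≠j} (z² - λ_k²)` (with `λ₀ = 0`),
which is `det(zI - 𝒥 - l·I₁ₓ₁)` when `(λ_j, w_j)` are the data of the spectral measure
`w₀δ₀ + Σ (w_j/2)(δ_{λ_j}+δ_{-λ_j})` of a `(2n+1) × (2n+1)` zero-diagonal Jacobi matrix. -/
noncomputable def kappaPolyO (n : ℕ) (l : ℝ) (lam : Fin n → ℝ) (w : Fin n → ℝ) (w₀ : ℝ) :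
    Polynomial ℝ :=
  X * ∏ j : Fin n, (X ^ 2 - C (lam j ^ 2)) -
    C l * (C w₀ * ∏ j : Fin n, (X ^ 2 - C (lam j ^ 2)) +
      ∑ j : Fin n, C (w j) * X ^ 2 * ∏ k ∈ Finset.univ.erase j, (X ^ 2 - C (lam k ^ 2)))

/-- `kappaPolyO` as a function of a single vector `x ∈ ℝ^(2n)` of variables
`(λ₁,…,λ_n, w₁,…,w_n)`, with `w₀ := 1 - Σ_j w_j`. -/
noncomputable def kappaMapO (n : ℕ) (l : ℝ) (x : Fin (2 * n) → ℝ) : Polynomial ℝ :=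
  kappaPolyO n l
    (fun j : Fin n => x ⟨(j : ℕ), by have := j.isLt; omega⟩)
    (fun j : Fin n => x ⟨n + (j : ℕ), by have := j.isLt; omega⟩)
    (1 - ∑ k : Fin n, x ⟨n + (k : ℕ), by have := k.isLt; omega⟩)

lemma Finset.erase_comm' {α : Type*} [DecidableEq α] (s : Finset α) (a b : α) :
    (s.erase a).erase b = (s.erase b).erase a := by
  ext x; simp only [Finset.mem_erase]; tauto

lemma coeff_comp_sq (p : Polynomial ℝ) (k : ℕ) :
    (p.comp (X^2 : Polynomial ℝ)).coeff (2*k) = p.coeff k := by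
  rw [comp_eq_sum_left, Polynomial.sum_def, finset_sum_coeff]
  simp only [← pow_mul, coeff_C_mul, coeff_X_pow]
  have : ∀ e ∈ p.support, p.coeff e * (if 2*k = 2*e then (1:ℝ) else 0)
      = if e = k then p.coeff e else 0 := by
    intro e _
    by_cases h : e = k <;> simp [h] <;> omega
  rw [Finset.sum_congr rfl this, Finset.sum_ite_eq' p.support k]
  by_cases h : k ∈ p.support
  · simp [h]
  · simp [h, Polynomial.notMem_support_iff.mp h]

lemma coeff_comp_sq_odd (p : Polynomial ℝ) (k : ℕ) :
    (p.comp (X^2 : Polynomial ℝ)).coeff (2*k+1) = 0 := by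
  rw [comp_eq_sum_left, Polynomial.sum_def, finset_sum_coeff]
  apply Finset.sum_eq_zero
  intro e _
  simp only [← pow_mul, coeff_C_mul, coeff_X_pow]
  have : ¬ (2*k+1 = 2*e) := by omega
  simp [this]

lemma finset_sum_comp' {ι : Type*} (s : Finset ι) (f : ι → Polynomial ℝ) (q : Polynomial ℝ) :
    (∑ i ∈ s, f i).comp q = ∑ i ∈ s, (f i).comp q := by
  simp only [Polynomial.comp, Polynomial.eval₂_finset_sum]

lemma prodsq {n : ℕ} (s : Finset (Fin n)) (μ : Fin n → ℝ) :
    ∏ k ∈ s, ((X:Polynomial ℝ)^2 - C (μ k)) = (∏ k ∈ s, ((X:Polynomial ℝ) - C (μ k))).comp (X^2) := by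
  rw [Polynomial.prod_comp]
  exact Finset.prod_congr rfl fun k _ => by simp [sub_comp]

/-- row-parity equivalence: `inl m ↦ 2m+1` (odd rows), `inr m ↦ 2m` (even rows). -/
def parityEquiv (n : ℕ) : (Fin n ⊕ Fin n) ≃ Fin (2*n) where
  toFun s := Sum.rec (fun m => ⟨2*(m:ℕ)+1, by have := m.isLt; omega⟩)
    (fun m => ⟨2*(m:ℕ), by have := m.isLt; omega⟩) s
  invFun i := if h : (i:ℕ) % 2 = 1 then Sum.inl ⟨(i:ℕ)/2, by have := i.isLt; omega⟩
    else Sum.inr ⟨(i:ℕ)/2, by have := i.isLt; omega⟩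
  left_inv s := by
    rcases s with m | m
    · have h : (2*(m:ℕ)+1) % 2 = 1 := by omega
      simp only [h, dif_pos]
      congr 1
      apply Fin.ext
      show (2*(m:ℕ)+1)/2 = (m:ℕ)
      omega
    · have h : ¬ ((2*(m:ℕ)) % 2 = 1) := by omega
      simp only [h, dif_neg, not_false_iff]
      congr 1
      apply Fin.ext
      show (2*(m:ℕ))/2 = (m:ℕ)
      omega
  right_inv i := by
    by_cases h : (i:ℕ) % 2 = 1 <;> simp only [h, dif_pos, dif_neg, not_false_iff] <;>
      · apply Fin.ext
        show _ = (i:ℕ)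
        simp only [Fin.val_mk]
        omega

/-- column equivalence: `inl j ↦ j` (λ columns), `inr j ↦ n+j` (w columns). -/
def colEquiv (n : ℕ) : (Fin n ⊕ Fin n) ≃ Fin (2*n) where
  toFun s := Sum.rec (fun m => ⟨(m:ℕ), by have := m.isLt; omega⟩)
    (fun m => ⟨n+(m:ℕ), by have := m.isLt; omega⟩) s
  invFun i := if h : (i:ℕ) < n then Sum.inl ⟨(i:ℕ), h⟩
    else Sum.inr ⟨(i:ℕ) - n, by have := i.isLt; omega⟩
  left_inv s := by
    rcases s with m | m
    · have h : ((m:ℕ) : ℕ) < n := m.isLt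
      simp only [h, dif_pos]
    · have h : ¬ (n + (m:ℕ) < n) := by omega
      simp only [h, dif_neg, not_false_iff]
      congr 1
      apply Fin.ext
      show n + (m:ℕ) - n = (m:ℕ)
      omega
  right_inv i := by
    by_cases h : (i:ℕ) < n <;> simp only [h, dif_pos, dif_neg, not_false_iff] <;>
      · apply Fin.ext
        show _ = (i:ℕ)
        simp only [Fin.val_mk]
        omega

lemma kappa_w (n : ℕ) (l : ℝ) (lam w : Fin n → ℝ) (m : Fin n) (t : ℝ) :
    kappaPolyO n l lam (Function.update w m t) (1 - ∑ k, Function.update w m t k)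
    = kappaPolyO n l lam w (1 - ∑ k, w k)
      + C (t - w m) * (C l * ((X ^ 2 - C (lam m ^ 2)) * ∏ k ∈ Finset.univ.erase m, (X ^ 2 - C (lam k ^ 2))
          - X ^ 2 * ∏ k ∈ Finset.univ.erase m, (X ^ 2 - C (lam k ^ 2)))) := by
  have hs : ∑ k, Function.update w m t k = t + ∑ k ∈ Finset.univ.erase m, w k := by
    rw [Finset.sum_update_of_mem (Finset.mem_univ m), Finset.erase_eq]
  have hs' : ∑ k, w k = w m + ∑ k ∈ Finset.univ.erase m, w k :=
    (Finset.add_sum_erase _ _ (Finset.mem_univ m)).symm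
  have hS : ∑ j, C (Function.update w m t j) * X ^ 2 * ∏ k ∈ Finset.univ.erase j, (X ^ 2 - C (lam k ^ 2))
      = C t * X ^ 2 * ∏ k ∈ Finset.univ.erase m, (X ^ 2 - C (lam k ^ 2))
        + ∑ j ∈ Finset.univ.erase m, C (w j) * X ^ 2 * ∏ k ∈ Finset.univ.erase j, (X ^ 2 - C (lam k ^ 2)) := by
    rw [← Finset.add_sum_erase _ _ (Finset.mem_univ m), Function.update_self]
    congr 1
    refine Finset.sum_congr rfl fun j hj => ?_
    rw [Function.update_of_ne (Finset.ne_of_mem_erase hj)]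
  have hS' : ∑ j, C (w j) * X ^ 2 * ∏ k ∈ Finset.univ.erase j, (X ^ 2 - C (lam k ^ 2))
      = C (w m) * X ^ 2 * ∏ k ∈ Finset.univ.erase m, (X ^ 2 - C (lam k ^ 2))
        + ∑ j ∈ Finset.univ.erase m, C (w j) * X ^ 2 * ∏ k ∈ Finset.univ.erase j, (X ^ 2 - C (lam k ^ 2)) :=
    (Finset.add_sum_erase _ _ (Finset.mem_univ m)).symm
  have hQ : ∏ j, (X ^ 2 - C (lam j ^ 2))
      = (X ^ 2 - C (lam m ^ 2)) * ∏ k ∈ Finset.univ.erase m, (X ^ 2 - C (lam k ^ 2)) :=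
    (Finset.mul_prod_erase _ _ (Finset.mem_univ m)).symm
  unfold kappaPolyO
  rw [hS, hS', hs, hs', hQ]
  simp only [map_sub, map_add, _root_.map_one, _root_.map_mul]
  ring

lemma kappa_lam (n : ℕ) (l : ℝ) (lam w : Fin n → ℝ) (w₀ : ℝ) (m : Fin n) (t : ℝ) :
    kappaPolyO n l (Function.update lam m t) w w₀
    = (X ^ 2 - C (t ^ 2)) *
        (X * ∏ k ∈ Finset.univ.erase m, (X ^ 2 - C (lam k ^ 2))
          - C l * (C w₀ * ∏ k ∈ Finset.univ.erase m, (X ^ 2 - C (lam k ^ 2))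
            + ∑ j ∈ Finset.univ.erase m, C (w j) * X ^ 2 *
                ∏ k ∈ (Finset.univ.erase m).erase j, (X ^ 2 - C (lam k ^ 2))))
      - C l * (C (w m) * X ^ 2 * ∏ k ∈ Finset.univ.erase m, (X ^ 2 - C (lam k ^ 2))) := by
  have hQ : ∏ j, (X ^ 2 - C (Function.update lam m t j ^ 2))
      = (X ^ 2 - C (t ^ 2)) * ∏ k ∈ Finset.univ.erase m, (X ^ 2 - C (lam k ^ 2)) := by
    rw [← Finset.mul_prod_erase _ _ (Finset.mem_univ m), Function.update_self]
    congr 1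
    refine Finset.prod_congr rfl fun k hk => ?_
    rw [Function.update_of_ne (Finset.ne_of_mem_erase hk)]
  have hsum : ∑ j, C (w j) * X ^ 2 * ∏ k ∈ Finset.univ.erase j, (X ^ 2 - C (Function.update lam m t k ^ 2))
      = C (w m) * X ^ 2 * ∏ k ∈ Finset.univ.erase m, (X ^ 2 - C (lam k ^ 2))
        + (X ^ 2 - C (t ^ 2)) * ∑ j ∈ Finset.univ.erase m, C (w j) * X ^ 2 *
            ∏ k ∈ (Finset.univ.erase m).erase j, (X ^ 2 - C (lam k ^ 2)) := by
    rw [← Finset.add_sum_erase _ _ (Finset.mem_univ m)]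
    congr 1
    · congr 1
      refine Finset.prod_congr rfl fun k hk => ?_
      rw [Function.update_of_ne (Finset.ne_of_mem_erase hk)]
    · rw [Finset.mul_sum]
      refine Finset.sum_congr rfl fun j hj => ?_
      have hm : m ∈ Finset.univ.erase j :=
        Finset.mem_erase.mpr ⟨(Finset.ne_of_mem_erase hj).symm, Finset.mem_univ m⟩
      rw [← Finset.mul_prod_erase _ _ hm, Function.update_self, Finset.erase_comm' ..]
      have : ∏ k ∈ (Finset.univ.erase m).erase j, (X ^ 2 - C (Function.update lam m t k ^ 2))
          = ∏ k ∈ (Finset.univ.erase m).erase j, (X ^ 2 - C (lam k ^ 2)) := by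
        refine Finset.prod_congr rfl fun k hk => ?_
        have hk' : k ≠ m := Finset.ne_of_mem_erase (Finset.mem_of_mem_erase hk)
        rw [Function.update_of_ne hk']
      rw [this]
      ring
  unfold kappaPolyO
  rw [hQ, hsum]
  ring


noncomputable def AmPoly (n : ℕ) (l : ℝ) (lam w : Fin n → ℝ) (m : Fin n) : Polynomial ℝ :=
  X * ∏ k ∈ Finset.univ.erase m, (X ^ 2 - C (lam k ^ 2))
    - C l * (C (1 - ∑ k, w k) * ∏ k ∈ Finset.univ.erase m, (X ^ 2 - C (lam k ^ 2))
      + ∑ j ∈ Finset.univ.erase m, C (w j) * X ^ 2 *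
          ∏ k ∈ (Finset.univ.erase m).erase j, (X ^ 2 - C (lam k ^ 2)))

lemma kappa_comp_form (n : ℕ) (l : ℝ) (lam w : Fin n → ℝ) (w₀ : ℝ) :
    kappaPolyO n l lam w w₀
    = X * ((∏ k, ((X:Polynomial ℝ) - C (lam k ^ 2))).comp (X ^ 2))
      - C l * ((C w₀ * ∏ k, ((X:Polynomial ℝ) - C (lam k ^ 2))
          + ∑ j, C (w j) * X * ∏ k ∈ Finset.univ.erase j, ((X:Polynomial ℝ) - C (lam k ^ 2))).comp (X ^ 2)) := by
  unfold kappaPolyO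
  simp only [add_comp, mul_comp, C_comp, X_comp, finset_sum_comp', prodsq]

lemma AmPoly_comp_form (n : ℕ) (l : ℝ) (lam w : Fin n → ℝ) (m : Fin n) :
    AmPoly n l lam w m
    = X * ((∏ k ∈ Finset.univ.erase m, ((X:Polynomial ℝ) - C (lam k ^ 2))).comp (X ^ 2))
      - C l * ((C (1 - ∑ k, w k) * ∏ k ∈ Finset.univ.erase m, ((X:Polynomial ℝ) - C (lam k ^ 2))
          + ∑ j ∈ Finset.univ.erase m, C (w j) * X *
              ∏ k ∈ (Finset.univ.erase m).erase j, ((X:Polynomial ℝ) - C (lam k ^ 2))).comp (X ^ 2)) := by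
  unfold AmPoly
  simp only [add_comp, mul_comp, C_comp, X_comp, finset_sum_comp', prodsq]

lemma AmPoly_odd (n : ℕ) (l : ℝ) (lam w : Fin n → ℝ) (m : Fin n) (r : ℕ) :
    (AmPoly n l lam w m).coeff (2*r+1)
      = (∏ k ∈ Finset.univ.erase m, ((X:Polynomial ℝ) - C (lam k ^ 2))).coeff r := by
  rw [AmPoly_comp_form, coeff_sub, coeff_X_mul, coeff_comp_sq, coeff_C_mul, coeff_comp_sq_odd]
  ring

lemma col_w (n : ℕ) (l : ℝ) (x : Fin (2*n) → ℝ) (lam w : Fin n → ℝ)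
    (hlam : lam = fun j : Fin n => x ⟨(j : ℕ), by have := j.isLt; omega⟩)
    (hw : w = fun j : Fin n => x ⟨n + (j : ℕ), by have := j.isLt; omega⟩)
    (m : Fin n) (i : ℕ) :
    deriv (fun t => (kappaMapO n l (Function.update x ⟨n + (m:ℕ), by have := m.isLt; omega⟩ t)).coeff i)
        (x ⟨n + (m:ℕ), by have := m.isLt; omega⟩)
      = (-(l * lam m ^ 2)) *
        (∏ k ∈ Finset.univ.erase m, ((X:Polynomial ℝ) ^ 2 - C (lam k ^ 2))).coeff i := by
  have hfun : ∀ t : ℝ, (fun j : Fin n => Function.update x ⟨n + (m:ℕ), by have := m.isLt; omega⟩ t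
      ⟨n + (j : ℕ), by have := j.isLt; omega⟩) = Function.update w m t := by
    intro t; funext j
    by_cases hj : j = m
    · subst hj
      have h2 : Function.update w j t j = t := Function.update_self _ _ _
      rw [h2]
      exact Function.update_self _ _ _
    · have h1 : (⟨n + (j : ℕ), by have := j.isLt; omega⟩ : Fin (2*n))
          ≠ ⟨n + (m:ℕ), by have := m.isLt; omega⟩ := by
        refine Fin.ne_of_val_ne ?_
        simp only [Fin.val_mk]
        have : (j:ℕ) ≠ (m:ℕ) := fun h => hj (Fin.ext h)
        omega
      rw [Function.update_of_ne h1, Function.update_of_ne hj, hw]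
  have hlam' : ∀ t : ℝ, (fun j : Fin n => Function.update x ⟨n + (m:ℕ), by have := m.isLt; omega⟩ t
      ⟨(j : ℕ), by have := j.isLt; omega⟩) = lam := by
    intro t; funext j
    have h1 : (⟨(j : ℕ), by have := j.isLt; omega⟩ : Fin (2*n))
        ≠ ⟨n + (m:ℕ), by have := m.isLt; omega⟩ := by
      refine Fin.ne_of_val_ne ?_
      simp only [Fin.val_mk]
      have := j.isLt
      omega
    rw [Function.update_of_ne h1, hlam]
  have hupd : ∀ t : ℝ, kappaMapO n l (Function.update x ⟨n + (m:ℕ), by have := m.isLt; omega⟩ t)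
      = kappaPolyO n l lam (Function.update w m t) (1 - ∑ k, Function.update w m t k) := by
    intro t
    unfold kappaMapO
    rw [hlam' t, hfun t]
  set P : Polynomial ℝ := ∏ k ∈ Finset.univ.erase m, ((X:Polynomial ℝ) ^ 2 - C (lam k ^ 2)) with hP
  set c : ℝ := (kappaPolyO n l lam w (1 - ∑ k, w k)).coeff i with hc
  set b : ℝ := (-(l * lam m ^ 2)) * P.coeff i with hb
  have hfeq : (fun t => (kappaMapO n l (Function.update x ⟨n + (m:ℕ), by have := m.isLt; omega⟩ t)).coeff i)
      = fun t => c + b * (t - w m) := by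
    funext t
    rw [hupd t, kappa_w]
    have hG : (C l : Polynomial ℝ) * ((X ^ 2 - C (lam m ^ 2)) * P - X ^ 2 * P)
        = C ((-(l * lam m ^ 2))) * P := by
      simp only [map_neg, _root_.map_mul]
      ring
    rw [hG, coeff_add, coeff_C_mul, coeff_C_mul, hb, hc]
    ring
  rw [hfeq]
  have hd : HasDerivAt (fun t : ℝ => c + b * (t - w m)) (b * 1)
      (x ⟨n + (m:ℕ), by have := m.isLt; omega⟩) :=
    (((hasDerivAt_id _).sub_const (w m)).const_mul b).const_add c
  rw [hd.deriv, mul_one, hb]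

lemma col_lam (n : ℕ) (l : ℝ) (x : Fin (2*n) → ℝ) (lam w : Fin n → ℝ)
    (hlam : lam = fun j : Fin n => x ⟨(j : ℕ), by have := j.isLt; omega⟩)
    (hw : w = fun j : Fin n => x ⟨n + (j : ℕ), by have := j.isLt; omega⟩)
    (m : Fin n) (i : ℕ) :
    deriv (fun t => (kappaMapO n l (Function.update x ⟨(m:ℕ), by have := m.isLt; omega⟩ t)).coeff i)
        (x ⟨(m:ℕ), by have := m.isLt; omega⟩)
      = -(2 * lam m * (AmPoly n l lam w m).coeff i) := by
  have hfun : ∀ t : ℝ, (fun j : Fin n => Function.update x ⟨(m:ℕ), by have := m.isLt; omega⟩ t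
      ⟨n + (j : ℕ), by have := j.isLt; omega⟩) = w := by
    intro t; funext j
    have h1 : (⟨n + (j : ℕ), by have := j.isLt; omega⟩ : Fin (2*n))
        ≠ ⟨(m:ℕ), by have := m.isLt; omega⟩ := by
      refine Fin.ne_of_val_ne ?_
      simp only [Fin.val_mk]
      have := m.isLt
      omega
    rw [Function.update_of_ne h1, hw]
  have hlam' : ∀ t : ℝ, (fun j : Fin n => Function.update x ⟨(m:ℕ), by have := m.isLt; omega⟩ t
      ⟨(j : ℕ), by have := j.isLt; omega⟩) = Function.update lam m t := by
    intro t; funext j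
    by_cases hj : j = m
    · subst hj
      have h2 : Function.update lam j t j = t := Function.update_self _ _ _
      rw [h2]
      exact Function.update_self _ _ _
    · have h1 : (⟨(j : ℕ), by have := j.isLt; omega⟩ : Fin (2*n))
          ≠ ⟨(m:ℕ), by have := m.isLt; omega⟩ := by
        refine Fin.ne_of_val_ne ?_
        simp only [Fin.val_mk]
        exact fun h => hj (Fin.ext h)
      rw [Function.update_of_ne h1, Function.update_of_ne hj, hlam]
  have hupd : ∀ t : ℝ, kappaMapO n l (Function.update x ⟨(m:ℕ), by have := m.isLt; omega⟩ t)
      = kappaPolyO n l (Function.update lam m t) w (1 - ∑ k, w k) := by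
    intro t
    unfold kappaMapO
    rw [hlam' t, hfun t]
  have hfeq : (fun t => (kappaMapO n l (Function.update x ⟨(m:ℕ), by have := m.isLt; omega⟩ t)).coeff i)
      = fun t => ((X ^ 2 * AmPoly n l lam w m
            - C l * (C (w m) * X ^ 2 * ∏ k ∈ Finset.univ.erase m, ((X:Polynomial ℝ) ^ 2 - C (lam k ^ 2)))).coeff i
          - (AmPoly n l lam w m).coeff i * t ^ 2) := by
    funext t
    rw [hupd t, kappa_lam]
    have hiden : ((X:Polynomial ℝ) ^ 2 - C (t ^ 2)) *
          (X * ∏ k ∈ Finset.univ.erase m, (X ^ 2 - C (lam k ^ 2))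
            - C l * (C (1 - ∑ k, w k) * ∏ k ∈ Finset.univ.erase m, (X ^ 2 - C (lam k ^ 2))
              + ∑ j ∈ Finset.univ.erase m, C (w j) * X ^ 2 *
                  ∏ k ∈ (Finset.univ.erase m).erase j, (X ^ 2 - C (lam k ^ 2))))
          - C l * (C (w m) * X ^ 2 * ∏ k ∈ Finset.univ.erase m, (X ^ 2 - C (lam k ^ 2)))
        = (X ^ 2 * AmPoly n l lam w m
            - C l * (C (w m) * X ^ 2 * ∏ k ∈ Finset.univ.erase m, ((X:Polynomial ℝ) ^ 2 - C (lam k ^ 2))))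
          - C (t ^ 2) * AmPoly n l lam w m := by
      unfold AmPoly
      ring
    rw [hiden, coeff_sub, coeff_C_mul]
    ring
  rw [hfeq]
  have hd := ((hasDerivAt_pow 2 (x ⟨(m:ℕ), by have := m.isLt; omega⟩)).const_mul
      ((AmPoly n l lam w m).coeff i)).const_sub ((X ^ 2 * AmPoly n l lam w m
      - C l * (C (w m) * X ^ 2 * ∏ k ∈ Finset.univ.erase m,
        ((X:Polynomial ℝ) ^ 2 - C (lam k ^ 2)))).coeff i)
  rw [hd.deriv]
  have hxm : x ⟨(m:ℕ), by have := m.isLt; omega⟩ = lam m := by rw [hlam]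
  rw [hxm]
  push_cast
  ring

lemma abs_det_D (n : ℕ) (μ : Fin n → ℝ) (hinj : Function.Injective μ) :
    |(Matrix.of fun r j : Fin n =>
        (∏ k ∈ Finset.univ.erase j, ((X:Polynomial ℝ) - C (μ k))).coeff (r:ℕ)).det|
    = ∏ i : Fin n, ∏ j ∈ Finset.Ioi i, |μ i - μ j| := by
  set D : Matrix (Fin n) (Fin n) ℝ := Matrix.of fun r j : Fin n =>
    (∏ k ∈ Finset.univ.erase j, ((X:Polynomial ℝ) - C (μ k))).coeff (r:ℕ) with hD
  set E : ℝ := ∏ i : Fin n, ∏ j ∈ Finset.Ioi i, |μ i - μ j| with hE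
  have hVD : vandermonde μ * D = diagonal (fun j => ∏ k ∈ Finset.univ.erase j, (μ j - μ k)) := by
    ext i j
    have hdeg : (∏ k ∈ Finset.univ.erase j, ((X:Polynomial ℝ) - C (μ k))).natDegree < n := by
      rw [Polynomial.natDegree_prod _ _ (fun k _ => X_sub_C_ne_zero (μ k))]
      have h1 : ∀ k ∈ Finset.univ.erase j, ((X:Polynomial ℝ) - C (μ k)).natDegree = 1 :=
        fun k _ => natDegree_X_sub_C (μ k)
      rw [Finset.sum_congr rfl h1, Finset.sum_const, smul_eq_mul, mul_one]
      have h2 : (Finset.univ.erase j).card = n - 1 := by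
        rw [Finset.card_erase_of_mem (Finset.mem_univ j), Finset.card_univ, Fintype.card_fin]
      rw [h2]
      have := j.isLt
      omega
    have hsum : ∑ k : Fin n, vandermonde μ i k * D k j
        = (∏ k ∈ Finset.univ.erase j, ((X:Polynomial ℝ) - C (μ k))).eval (μ i) := by
      rw [eval_eq_sum_range' hdeg, ← Fin.sum_univ_eq_sum_range]
      refine Finset.sum_congr rfl fun k _ => ?_
      rw [Matrix.vandermonde_apply, hD]
      simp only [Matrix.of_apply]
      ring
    rw [Matrix.mul_apply, hsum]
    by_cases hij : i = j
    · subst hij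
      rw [Matrix.diagonal_apply_eq]
      simp [eval_prod]
    · rw [Matrix.diagonal_apply_ne _ hij]
      rw [eval_prod]
      apply Finset.prod_eq_zero (Finset.mem_erase.mpr ⟨hij, Finset.mem_univ i⟩)
      simp
  have hdetprod : (vandermonde μ).det * D.det = ∏ j, ∏ k ∈ Finset.univ.erase j, (μ j - μ k) := by
    rw [← Matrix.det_mul, hVD, Matrix.det_diagonal]
  have habsdet : |(vandermonde μ).det| = E := by
    rw [Matrix.det_vandermonde, Finset.abs_prod, hE]
    refine Finset.prod_congr rfl fun i _ => ?_
    rw [Finset.abs_prod]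
    exact Finset.prod_congr rfl fun j _ => abs_sub_comm _ _
  have hsplit : ∀ j : Fin n, ∏ k ∈ Finset.univ.erase j, |μ j - μ k|
      = (∏ k ∈ Finset.Iio j, |μ j - μ k|) * ∏ k ∈ Finset.Ioi j, |μ j - μ k| := by
    intro j
    have hu : Finset.univ.erase j = Finset.Iio j ∪ Finset.Ioi j := by
      ext k
      simp only [Finset.mem_erase, Finset.mem_univ, and_true, Finset.mem_union,
        Finset.mem_Iio, Finset.mem_Ioi]
      exact ne_iff_lt_or_gt
    have hdisj : Disjoint (Finset.Iio j) (Finset.Ioi j) := by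
      rw [Finset.disjoint_left]
      intro a ha hb
      rw [Finset.mem_Iio] at ha
      rw [Finset.mem_Ioi] at hb
      exact absurd hb (not_lt_of_gt ha)
    rw [hu, Finset.prod_union hdisj]
  have hIio : ∏ j : Fin n, ∏ k ∈ Finset.Iio j, |μ j - μ k| = E := by
    have hcomm : ∏ j : Fin n, ∏ k ∈ Finset.Iio j, |μ j - μ k|
        = ∏ k : Fin n, ∏ j ∈ Finset.Ioi k, |μ j - μ k| := by
      apply Finset.prod_comm'
      intro j k
      simp only [Finset.mem_univ, true_and, and_true, Finset.mem_Iio, Finset.mem_Ioi]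
    rw [hcomm, hE]
    refine Finset.prod_congr rfl fun k _ => Finset.prod_congr rfl fun j _ => abs_sub_comm _ _
  have habs2 : |∏ j : Fin n, ∏ k ∈ Finset.univ.erase j, (μ j - μ k)| = E * E := by
    rw [Finset.abs_prod]
    have h1 : ∀ j ∈ (Finset.univ : Finset (Fin n)), |∏ k ∈ Finset.univ.erase j, (μ j - μ k)|
        = (∏ k ∈ Finset.Iio j, |μ j - μ k|) * ∏ k ∈ Finset.Ioi j, |μ j - μ k| := by
      intro j _
      rw [Finset.abs_prod, hsplit j]
    rw [Finset.prod_congr rfl h1, Finset.prod_mul_distrib, hIio]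
  have hV0 : |(vandermonde μ).det| ≠ 0 :=
    abs_ne_zero.mpr (Matrix.det_vandermonde_ne_zero_iff.mpr hinj)
  have hE0 : E ≠ 0 := habsdet ▸ hV0
  have : E * |D.det| = E * E := by
    conv_lhs => rw [← habsdet]
    rw [← abs_mul, hdetprod, habs2]
  exact mul_left_cancel₀ hE0 this


/-- the Jacobian of the change of variables
`(λ₁,…,λ_n, w₁,…,w_n) ↦ (κ₀,…,κ_{2n-1})` (Maclaurin coefficients of
`det(zI - 𝒥 - l·I₁ₓ₁)` in the odd case) has absolute value
`2^n l^n ∏ λ_j³ ∏_{j<k} |λ_j² - λ_k²|²`; moreover `κ_{2n+1} = 1` and `κ_{2n} = -l`. -/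
theorem jacobian_hermitian_odd (n : ℕ) (hn : 1 ≤ n) (l : ℝ) (hl : 0 < l)
    (x : Fin (2 * n) → ℝ)
    (lam : Fin n → ℝ) (hlam : lam = fun j : Fin n => x ⟨(j : ℕ), by have := j.isLt; omega⟩)
    (hord : StrictAnti lam) (hpos : ∀ j, 0 < lam j)
    (hwpos : ∀ j : Fin n, 0 < x ⟨n + (j : ℕ), by have := j.isLt; omega⟩)
    (hwsum : ∑ j : Fin n, x ⟨n + (j : ℕ), by have := j.isLt; omega⟩ < 1) :
    (kappaMapO n l x).coeff (2 * n + 1) = 1 ∧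
    (kappaMapO n l x).coeff (2 * n) = -l ∧
    |(Matrix.of fun i j : Fin (2 * n) =>
        deriv (fun t => (kappaMapO n l (Function.update x j t)).coeff (i : ℕ)) (x j)).det| =
      2 ^ n * l ^ n * (∏ j, lam j ^ 3) *
        ∏ j : Fin n, ∏ k ∈ Finset.Ioi j, |lam j ^ 2 - lam k ^ 2| ^ 2 := by
  set w : Fin n → ℝ := fun j : Fin n => x ⟨n + (j : ℕ), by have := j.isLt; omega⟩ with hw
  have hxmap : kappaMapO n l x = kappaPolyO n l lam w (1 - ∑ k, w k) := by
    unfold kappaMapO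
    rw [← hlam]
  -- monicity facts
  have hqfm : (∏ k : Fin n, ((X:Polynomial ℝ) - C (lam k ^ 2))).Monic :=
    monic_prod_of_monic _ _ fun k _ => monic_X_sub_C _
  have hqfd : (∏ k : Fin n, ((X:Polynomial ℝ) - C (lam k ^ 2))).natDegree = n := by
    rw [Polynomial.natDegree_prod _ _ (fun k _ => X_sub_C_ne_zero _)]
    have h1 : ∀ k ∈ (Finset.univ : Finset (Fin n)), ((X:Polynomial ℝ) - C (lam k ^ 2)).natDegree = 1 :=
      fun k _ => natDegree_X_sub_C _
    rw [Finset.sum_congr rfl h1, Finset.sum_const, smul_eq_mul, mul_one, Finset.card_univ,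
      Fintype.card_fin]
  have hqfn : (∏ k : Fin n, ((X:Polynomial ℝ) - C (lam k ^ 2))).coeff n = 1 := by
    have h := hqfm.coeff_natDegree
    rwa [hqfd] at h
  have hpmc : ∀ j : Fin n, (∏ k ∈ Finset.univ.erase j, ((X:Polynomial ℝ) - C (lam k ^ 2))).coeff (n-1) = 1 := by
    intro j
    have h1 : (∏ k ∈ Finset.univ.erase j, ((X:Polynomial ℝ) - C (lam k ^ 2))).Monic :=
      monic_prod_of_monic _ _ fun k _ => monic_X_sub_C _
    have h2 : (∏ k ∈ Finset.univ.erase j, ((X:Polynomial ℝ) - C (lam k ^ 2))).natDegree = n - 1 := by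
      rw [Polynomial.natDegree_prod _ _ (fun k _ => X_sub_C_ne_zero _)]
      have h3 : ∀ k ∈ Finset.univ.erase j, ((X:Polynomial ℝ) - C (lam k ^ 2)).natDegree = 1 :=
        fun k _ => natDegree_X_sub_C _
      rw [Finset.sum_congr rfl h3, Finset.sum_const, smul_eq_mul, mul_one,
        Finset.card_erase_of_mem (Finset.mem_univ j), Finset.card_univ, Fintype.card_fin]
    have h4 := h1.coeff_natDegree
    rwa [h2] at h4
  refine ⟨?_, ?_, ?_⟩
  · rw [hxmap, kappa_comp_form, coeff_sub, coeff_X_mul, coeff_comp_sq, hqfn, coeff_C_mul,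
      coeff_comp_sq_odd]
    ring
  · rw [hxmap, kappa_comp_form, coeff_sub]
    have h2n : 2 * n = (2 * (n-1) + 1) + 1 := by omega
    have hfirst : ((X:Polynomial ℝ) *
        ((∏ k : Fin n, ((X:Polynomial ℝ) - C (lam k ^ 2))).comp (X ^ 2))).coeff (2*n) = 0 := by
      rw [h2n, coeff_X_mul, coeff_comp_sq_odd]
    rw [hfirst, coeff_C_mul, coeff_comp_sq]
    have hg : (C (1 - ∑ k, w k) * ∏ k : Fin n, ((X:Polynomial ℝ) - C (lam k ^ 2))
        + ∑ j : Fin n, C (w j) * X * ∏ k ∈ Finset.univ.erase j,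
            ((X:Polynomial ℝ) - C (lam k ^ 2))).coeff n = 1 := by
      rw [coeff_add, coeff_C_mul, hqfn, finset_sum_coeff]
      have hterm : ∀ j ∈ (Finset.univ : Finset (Fin n)),
          (C (w j) * X * ∏ k ∈ Finset.univ.erase j, ((X:Polynomial ℝ) - C (lam k ^ 2))).coeff n
            = w j := by
        intro j _
        have hn1 : n = (n-1) + 1 := by omega
        have h5 : ((X:Polynomial ℝ) * ∏ k ∈ Finset.univ.erase j,
            ((X:Polynomial ℝ) - C (lam k ^ 2))).coeff ((n-1)+1) = 1 := by
          rw [coeff_X_mul, hpmc j]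
        rw [← hn1] at h5
        rw [mul_assoc, coeff_C_mul, h5, mul_one]
      rw [Finset.sum_congr rfl hterm]
      ring
    rw [hg]
    ring
  · -- the Jacobian determinant
    have hμinj : Function.Injective (fun j : Fin n => lam j ^ 2) := by
      have key : ∀ a b : Fin n, a < b → lam b ^ 2 < lam a ^ 2 := by
        intro a b h
        have h1 := hord h
        have h2 := hpos a
        have h3 := hpos b
        nlinarith
      intro a b hab
      simp only [] at hab
      rcases lt_trichotomy a b with h | h | h
      · exact absurd hab (ne_of_gt (key a b h))
      · exact h
      · exact absurd hab (ne_of_gt (key b a h)).symm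
    set M : Matrix (Fin (2*n)) (Fin (2*n)) ℝ := Matrix.of fun i j : Fin (2 * n) =>
        deriv (fun t => (kappaMapO n l (Function.update x j t)).coeff (i : ℕ)) (x j) with hM
    set D : Matrix (Fin n) (Fin n) ℝ := Matrix.of fun r j : Fin n =>
        (∏ k ∈ Finset.univ.erase j, ((X:Polynomial ℝ) - C (lam k ^ 2))).coeff (r:ℕ) with hD
    have hL := col_lam n l x lam w hlam hw
    have hW := col_w n l x lam w hlam hw
    have hblock : M.submatrix (parityEquiv n) (colEquiv n)
        = fromBlocks (D * diagonal fun j => -(2 * lam j))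
            0
            (Matrix.of fun r j : Fin n => -(2 * lam j * (AmPoly n l lam w j).coeff (2*(r:ℕ))))
            (D * diagonal fun j => -(l * lam j ^ 2)) := by
      ext s t
      cases s with
      | inl r =>
        cases t with
        | inl j =>
          simp only [Matrix.submatrix_apply, parityEquiv, colEquiv, Equiv.coe_fn_mk, hM,
            Matrix.of_apply, Matrix.fromBlocks_apply₁₁]
          rw [hL j (2*(r:ℕ)+1), AmPoly_odd, Matrix.mul_diagonal]
          simp only [hD, Matrix.of_apply]
          ring
        | inr j =>
          simp only [Matrix.submatrix_apply, parityEquiv, colEquiv, Equiv.coe_fn_mk, hM,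
            Matrix.of_apply, Matrix.fromBlocks_apply₁₂]
          rw [hW j (2*(r:ℕ)+1), prodsq, coeff_comp_sq_odd]
          simp
      | inr r =>
        cases t with
        | inl j =>
          simp only [Matrix.submatrix_apply, parityEquiv, colEquiv, Equiv.coe_fn_mk, hM,
            Matrix.of_apply, Matrix.fromBlocks_apply₂₁]
          rw [hL j (2*(r:ℕ))]
        | inr j =>
          simp only [Matrix.submatrix_apply, parityEquiv, colEquiv, Equiv.coe_fn_mk, hM,
            Matrix.of_apply, Matrix.fromBlocks_apply₂₂]
          rw [hW j (2*(r:ℕ)), prodsq, coeff_comp_sq, Matrix.mul_diagonal]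
          simp only [hD, Matrix.of_apply]
          ring
    have habs : |(M.submatrix (parityEquiv n) (colEquiv n)).det| = |M.det| :=
      Matrix.abs_det_submatrix_equiv_equiv (parityEquiv n) (colEquiv n) M
    rw [← habs, hblock, Matrix.det_fromBlocks_zero₁₂, Matrix.det_mul, Matrix.det_mul,
      Matrix.det_diagonal, Matrix.det_diagonal]
    have hDdet : |D.det| = ∏ i : Fin n, ∏ j ∈ Finset.Ioi i, |lam i ^ 2 - lam j ^ 2| := by
      have h := abs_det_D n (fun j => lam j ^ 2) hμinj
      simpa only [] using h
    have h2l : ∏ j : Fin n, |-(2 * lam j)| = 2^n * ∏ j, lam j := by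
      have h1 : ∀ j ∈ (Finset.univ : Finset (Fin n)), |-(2 * lam j)| = 2 * lam j := by
        intro j _
        rw [abs_neg, abs_of_pos (by have := hpos j; linarith)]
      rw [Finset.prod_congr rfl h1, Finset.prod_mul_distrib, Finset.prod_const,
        Finset.card_univ, Fintype.card_fin]
    have hll : ∏ j : Fin n, |-(l * lam j ^ 2)| = l^n * ∏ j, lam j ^ 2 := by
      have h1 : ∀ j ∈ (Finset.univ : Finset (Fin n)), |-(l * lam j ^ 2)| = l * lam j ^ 2 := by
        intro j _
        rw [abs_neg, abs_of_pos (by have := hpos j; positivity)]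
      rw [Finset.prod_congr rfl h1, Finset.prod_mul_distrib, Finset.prod_const,
        Finset.card_univ, Fintype.card_fin]
    rw [abs_mul, abs_mul, abs_mul, Finset.abs_prod, Finset.abs_prod, hDdet, h2l, hll]
    have hE2 : (∏ i : Fin n, ∏ j ∈ Finset.Ioi i, |lam i ^ 2 - lam j ^ 2|) *
          (∏ i : Fin n, ∏ j ∈ Finset.Ioi i, |lam i ^ 2 - lam j ^ 2|)
        = ∏ i : Fin n, ∏ j ∈ Finset.Ioi i, |lam i ^ 2 - lam j ^ 2| ^ 2 := by
      rw [← Finset.prod_mul_distrib]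
      refine Finset.prod_congr rfl fun i _ => ?_
      rw [← Finset.prod_mul_distrib]
      exact Finset.prod_congr rfl fun j _ => (sq _).symm
    have hl3 : (∏ j : Fin n, lam j) * ∏ j : Fin n, lam j ^ 2 = ∏ j : Fin n, lam j ^ 3 := by
      rw [← Finset.prod_mul_distrib]
      exact Finset.prod_congr rfl fun j _ => by ring
    calc (∏ i : Fin n, ∏ j ∈ Finset.Ioi i, |lam i ^ 2 - lam j ^ 2|) * (2^n * ∏ j, lam j) *
          ((∏ i : Fin n, ∏ j ∈ Finset.Ioi i, |lam i ^ 2 - lam j ^ 2|) * (l^n * ∏ j, lam j ^ 2))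
        = 2^n * l^n * ((∏ j : Fin n, lam j) * ∏ j : Fin n, lam j ^ 2) *
            ((∏ i : Fin n, ∏ j ∈ Finset.Ioi i, |lam i ^ 2 - lam j ^ 2|) *
              (∏ i : Fin n, ∏ j ∈ Finset.Ioi i, |lam i ^ 2 - lam j ^ 2|)) := by ring
      _ = _ := by rw [hl3, hE2]
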